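/- Let S be an inverse semigroup and H ⊆ S × S a symmetric set generating a left congruence ρ = ⟨H⟩. For each pair (a,b) ∈ H, the three pairs (a⁻¹b, a⁻¹bb⁻¹a), (a⁻¹a, a⁻¹bb⁻¹a), (b⁻¹aa⁻¹b, b⁻¹b) all lie in ρ; conversely, if a left congruence σ contains these three pairs then (a,b) ∈ σ. Consequently ρ is generated by a set of pairs each of which has at least one idempotent coordinate, and if H is finite this set can be taken finite. -/
import Mathlib


class InverseSemigroup (S : Type*) extends Semigroup S where
  inv : S → S
  mul_inv_mul : ∀ a : S, a * inv a * a = a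
  inv_mul_inv : ∀ a : S, inv a * a * inv a = inv a
  inv_unique : ∀ a b : S, a * b * a = a → b * a * b = b → b = inv a

open InverseSemigroup

/-- `e` is an idempotent. -/
def IsIdem {S : Type*} [Mul S] (e : S) : Prop := e * e = e

/-- `r` is a left congruence: an equivalence relation compatible with left multiplication. -/
def IsLeftCongruence {S : Type*} [Semigroup S] (r : S → S → Prop) : Prop :=
  Equivalence r ∧ ∀ a b c : S, r a b → r (c * a) (c * b)

/-- The inverse kernel of a relation: elements related to `a * a⁻¹`. -/
def InK {S : Type*} [InverseSemigroup S] (r : S → S → Prop) : Set S :=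
  {a | r a (a * inv a)}

/-- The kernel: elements related to some idempotent. -/
def lker {S : Type*} [InverseSemigroup S] (r : S → S → Prop) : Set S :=
  {a | ∃ e, IsIdem e ∧ r a e}

/-- `τ` is a congruence on the semilattice of idempotents `E(S)`. -/
def IsECong {S : Type*} [InverseSemigroup S] (τ : S → S → Prop) : Prop :=
  (∀ e f, τ e f → IsIdem e ∧ IsIdem f) ∧
  (∀ e, IsIdem e → τ e e) ∧
  (∀ e f, τ e f → τ f e) ∧
  (∀ e f g, τ e f → τ f g → τ e g) ∧
  (∀ e f g, IsIdem g → τ e f → τ (g * e) (g * f))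

/-- The normaliser of a congruence on the idempotents. -/
def normaliser {S : Type*} [InverseSemigroup S] (τ : S → S → Prop) : Set S :=
  {a | ∀ e f, τ e f → τ (a * e * inv a) (a * f * inv a) ∧ τ (inv a * e * a) (inv a * f * a)}

/-- `T` is a full inverse subsemigroup of `S`. -/
def IsFullInverseSub {S : Type*} [InverseSemigroup S] (T : Set S) : Prop :=
  (∀ e : S, IsIdem e → e ∈ T) ∧ (∀ a b, a ∈ T → b ∈ T → a * b ∈ T) ∧
  (∀ a, a ∈ T → inv a ∈ T)

/-- The left congruence generated by a binary relation `H`. -/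
def genLC {S : Type*} [Semigroup S] (H : S → S → Prop) : S → S → Prop :=
  fun a b => ∀ σ : S → S → Prop, IsLeftCongruence σ → (∀ x y, H x y → σ x y) → σ a b


section Aux
variable {S : Type*} [InverseSemigroup S]

lemma isIdem_mul_inv (a : S) : IsIdem (a * inv a) := by
  show a * inv a * (a * inv a) = a * inv a
  rw [← mul_assoc, mul_inv_mul]

lemma isIdem_inv_mul (a : S) : IsIdem (inv a * a) := by
  show inv a * a * (inv a * a) = inv a * a
  rw [← mul_assoc, inv_mul_inv]

lemma inv_inv' (a : S) : inv (inv a) = a :=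
  (inv_unique (inv a) a (inv_mul_inv a) (mul_inv_mul a)).symm

lemma inv_of_idem {e : S} (he : IsIdem e) : inv e = e :=
  (inv_unique e e (by rw [he, he]) (by rw [he, he])).symm

lemma idem_absorb {e : S} (he : IsIdem e) (y : S) : e * (e * y) = e * y := by
  rw [← mul_assoc, he]

lemma idem_mul {e f : S} (he : IsIdem e) (hf : IsIdem f) : IsIdem (e * f) := by
  set x := inv (e * f) with hx
  have h1 : (e * f) * (f * x * e) * (e * f) = e * f := by
    have key := mul_inv_mul (e * f)
    simp only [mul_assoc] at key ⊢
    rw [idem_absorb hf, idem_absorb he]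
    exact key
  have key2 : x * (e * (f * (x * e))) = x * e := by
    have := congrArg (fun z => z * e) (inv_mul_inv (e * f))
    simp only [mul_assoc] at this
    exact this
  have h2 : (f * x * e) * (e * f) * (f * x * e) = f * x * e := by
    simp only [mul_assoc]
    rw [idem_absorb he, idem_absorb hf, key2]
  have xeq : f * x * e = x := inv_unique (e * f) (f * x * e) h1 h2
  have hxx : IsIdem x := by
    show x * x = x
    conv_lhs => rw [← xeq]
    simp only [mul_assoc]
    rw [key2, ← mul_assoc, xeq]
  have hef : e * f = inv (e * f) := by
    conv_lhs => rw [← inv_inv' (e * f)]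
    exact inv_of_idem hxx
  rw [hef]; exact hxx

lemma idem_comm {e f : S} (he : IsIdem e) (hf : IsIdem f) : e * f = f * e := by
  have hef := idem_mul he hf
  have hfe := idem_mul hf he
  have h1 : (e * f) * (f * e) * (e * f) = e * f := by
    have := hef
    simp only [IsIdem, mul_assoc] at this ⊢
    rw [idem_absorb hf, idem_absorb he]
    exact this
  have h2 : (f * e) * (e * f) * (f * e) = f * e := by
    have := hfe
    simp only [IsIdem, mul_assoc] at this ⊢
    rw [idem_absorb he, idem_absorb hf]
    exact this
  have := inv_unique (e * f) (f * e) h1 h2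
  rw [inv_of_idem hef] at this
  exact this.symm

lemma isIdem_conj (a b : S) : IsIdem (inv a * b * inv b * a) := by
  have hc : b * inv b * (a * inv a) = a * inv a * (b * inv b) :=
    idem_comm (isIdem_mul_inv b) (isIdem_mul_inv a)
  have hinv : ∀ X : S, inv a * (a * (inv a * X)) = inv a * X := fun X => by
    rw [← mul_assoc, ← mul_assoc, inv_mul_inv]
  show (inv a * b * inv b * a) * (inv a * b * inv b * a) = inv a * b * inv b * a
  calc (inv a * b * inv b * a) * (inv a * b * inv b * a)
      = inv a * (b * inv b * (a * inv a) * (b * inv b)) * a := by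
        simp only [mul_assoc]
    _ = inv a * (a * inv a * (b * inv b) * (b * inv b)) * a := by rw [hc]
    _ = inv a * (a * inv a * (b * inv b)) * a := by
        rw [mul_assoc (a * inv a), isIdem_mul_inv b]
    _ = inv a * b * inv b * a := by
        simp only [mul_assoc]
        rw [hinv]

end Aux

section GenLC
variable {S : Type*} [Semigroup S]

lemma genLC_isLC (H : S → S → Prop) : IsLeftCongruence (genLC H) :=
  ⟨⟨fun a σ hσ _ => hσ.1.refl a,
    fun h σ hσ hH => hσ.1.symm (h σ hσ hH),
    fun h1 h2 σ hσ hH => hσ.1.trans (h1 σ hσ hH) (h2 σ hσ hH)⟩,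
   fun a b c h σ hσ hH => hσ.2 a b c (h σ hσ hH)⟩

lemma genLC_of {H : S → S → Prop} {a b : S} (h : H a b) : genLC H a b :=
  fun _ _ hH => hH a b h

end GenLC

theorem stmt17 {S : Type*} [InverseSemigroup S] (H : S → S → Prop)
    (hsym : ∀ a b, H a b → H b a) :
    (∀ a b : S, H a b →
      genLC H (inv a * b) (inv a * b * inv b * a) ∧
      genLC H (inv a * a) (inv a * b * inv b * a) ∧
      genLC H (inv b * a * inv a * b) (inv b * b)) ∧
    (∀ σ : S → S → Prop, IsLeftCongruence σ → ∀ a b : S,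
      σ (inv a * b) (inv a * b * inv b * a) →
      σ (inv a * a) (inv a * b * inv b * a) →
      σ (inv b * a * inv a * b) (inv b * b) → σ a b) ∧
    (∃ H' : S → S → Prop,
      (∀ x y, H' x y → IsIdem x ∨ IsIdem y) ∧
      genLC H' = genLC H ∧
      ({p : S × S | H p.1 p.2}.Finite → {p : S × S | H' p.1 p.2}.Finite)) := by
  obtain ⟨⟨hr, hs, ht⟩, hc⟩ := genLC_isLC H
  -- first two pairs
  have main : ∀ a b : S, H a b →
      genLC H (inv a * b) (inv a * b * inv b * a) ∧
      genLC H (inv a * a) (inv a * b * inv b * a) := by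
    intro a b hab
    have hab' : genLC H a b := genLC_of hab
    have e1 : genLC H (inv a * b * inv b * a) (inv a * b) := by
      have heq : inv a * b * inv b * b = inv a * b := by
        rw [mul_assoc (inv a * b) (inv b) b, mul_assoc (inv a) b (inv b * b),
          ← mul_assoc b (inv b) b, mul_inv_mul]
      have h := hc a b (inv a * b * inv b) hab'
      rwa [heq] at h
    have p1 : genLC H (inv a * b) (inv a * b * inv b * a) := hs e1
    have e2 : genLC H (inv a * a) (inv a * b) := hc a b (inv a) hab'
    exact ⟨p1, ht e2 p1⟩
  have part1 : ∀ a b : S, H a b →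
      genLC H (inv a * b) (inv a * b * inv b * a) ∧
      genLC H (inv a * a) (inv a * b * inv b * a) ∧
      genLC H (inv b * a * inv a * b) (inv b * b) := by
    intro a b hab
    exact ⟨(main a b hab).1, (main a b hab).2, hs (main b a (hsym a b hab)).2⟩
  have part2 : ∀ σ : S → S → Prop, IsLeftCongruence σ → ∀ a b : S,
      σ (inv a * b) (inv a * b * inv b * a) →
      σ (inv a * a) (inv a * b * inv b * a) →
      σ (inv b * a * inv a * b) (inv b * b) → σ a b := by
    intro σ hσ a b h1 h2 h3
    clear hr hs ht hc
    obtain ⟨⟨sr, ss, st⟩, sc⟩ := hσ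
    have s1 : σ (inv a * a) (inv a * b) := st h2 (ss h1)
    have s2 := sc _ _ a s1
    rw [← mul_assoc, mul_inv_mul, ← mul_assoc] at s2
    -- s2 : σ a (a * inv a * b)
    have s3 := sc _ _ b h3
    rw [← mul_assoc b (inv b) b, mul_inv_mul] at s3
    have key : b * (inv b * a * inv a * b) = a * inv a * b := by
      have hcm : b * inv b * (a * inv a) = a * inv a * (b * inv b) :=
        idem_comm (isIdem_mul_inv b) (isIdem_mul_inv a)
      calc b * (inv b * a * inv a * b)
          = b * inv b * (a * inv a) * b := by simp only [mul_assoc]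
        _ = a * inv a * (b * inv b) * b := by rw [hcm]
        _ = a * inv a * b := by
            rw [mul_assoc (a * inv a) (b * inv b) b, mul_inv_mul]
    rw [key] at s3
    exact st s2 s3
  refine ⟨part1, part2, ?_⟩
  refine ⟨fun x y => ∃ c d, H c d ∧
      ((x = inv c * d ∧ y = inv c * d * inv d * c) ∨
       (x = inv c * c ∧ y = inv c * d * inv d * c) ∨
       (x = inv d * c * inv c * d ∧ y = inv d * d)), ?_, ?_, ?_⟩
  · rintro x y ⟨c, d, hcd, (⟨rfl, rfl⟩ | ⟨rfl, rfl⟩ | ⟨rfl, rfl⟩)⟩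
    · exact Or.inr (isIdem_conj c d)
    · exact Or.inl (isIdem_inv_mul c)
    · exact Or.inr (isIdem_inv_mul d)
  · funext x y
    apply propext
    constructor
    · intro h
      refine h (genLC H) (genLC_isLC H) ?_
      rintro u v ⟨c, d, hcd, (⟨rfl, rfl⟩ | ⟨rfl, rfl⟩ | ⟨rfl, rfl⟩)⟩
      · exact (part1 c d hcd).1
      · exact (part1 c d hcd).2.1
      · exact (part1 c d hcd).2.2
    · intro h
      refine h _ (genLC_isLC _) ?_
      intro u v huv
      exact part2 _ (genLC_isLC _) u v
        (genLC_of ⟨u, v, huv, Or.inl ⟨rfl, rfl⟩⟩)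
        (genLC_of ⟨u, v, huv, Or.inr (Or.inl ⟨rfl, rfl⟩)⟩)
        (genLC_of ⟨u, v, huv, Or.inr (Or.inr ⟨rfl, rfl⟩)⟩)
  · intro hfin
    have hsub : {p : S × S | ∃ c d, H c d ∧
        ((p.1 = inv c * d ∧ p.2 = inv c * d * inv d * c) ∨
         (p.1 = inv c * c ∧ p.2 = inv c * d * inv d * c) ∨
         (p.1 = inv d * c * inv c * d ∧ p.2 = inv d * d))} ⊆
        ((fun p : S × S => (inv p.1 * p.2, inv p.1 * p.2 * inv p.2 * p.1)) ''
          {p : S × S | H p.1 p.2}) ∪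
        ((fun p : S × S => (inv p.1 * p.1, inv p.1 * p.2 * inv p.2 * p.1)) ''
          {p : S × S | H p.1 p.2}) ∪
        ((fun p : S × S => (inv p.2 * p.1 * inv p.1 * p.2, inv p.2 * p.2)) ''
          {p : S × S | H p.1 p.2}) := by
      rintro p ⟨c, d, hcd, (⟨h1, h2⟩ | ⟨h1, h2⟩ | ⟨h1, h2⟩)⟩
      · exact Or.inl (Or.inl ⟨(c, d), hcd, Prod.ext h1.symm h2.symm⟩)
      · exact Or.inl (Or.inr ⟨(c, d), hcd, Prod.ext h1.symm h2.symm⟩)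
      · exact Or.inr ⟨(c, d), hcd, Prod.ext h1.symm h2.symm⟩
    exact Set.Finite.subset (((hfin.image _).union (hfin.image _)).union
      (hfin.image _)) hsub
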